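/- For β > 0 and c ∈ (0,1), the THINC scheme satisfies the convection boundedness condition T_β(x) ≤ x/c for all x ∈ (0,1) if and only if c ≤ sinh β/(β e^β). -/

import Mathlib

/-- THINC normalized reconstruction function. -/
noncomputable def thinc (β x : ℝ) : ℝ :=
  (Real.sinh β + Real.cosh β - Real.exp (β * (1 - 2 * x))) / (2 * Real.sinh β)

lemma thinc_zero (β : ℝ) : thinc β 0 = 0 := by
  simp [thinc, Real.sinh_add_cosh]

lemma thinc_hasDerivAt (β : ℝ) (hβ : 0 < β) :
    HasDerivAt (thinc β) (β * Real.exp β / Real.sinh β) 0 := by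
  have hS : Real.sinh β ≠ 0 := ne_of_gt (Real.sinh_pos_iff.2 hβ)
  have h1 : HasDerivAt (fun x : ℝ => β * (1 - 2 * x)) (β * (-2)) 0 := by
    have := ((hasDerivAt_id (0:ℝ)).const_mul (2:ℝ)).const_sub (1:ℝ)
    simpa using this.const_mul β
  have h2 := (h1.exp.const_sub (Real.sinh β + Real.cosh β)).div_const (2 * Real.sinh β)
  have : thinc β = fun x =>
      (Real.sinh β + Real.cosh β - Real.exp (β * (1 - 2 * x))) / (2 * Real.sinh β) := rfl
  rw [this]
  convert h2 using 1
  case e'_4 => rfl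
  case e'_5 => rfl
  rw [div_eq_div_iff hS (mul_ne_zero two_ne_zero hS)]
  simp only [mul_zero, sub_zero, mul_one]
  ring

theorem stmt7 (β c : ℝ) (hβ : 0 < β) (hc : c ∈ Set.Ioo (0 : ℝ) 1) :
    (∀ x ∈ Set.Ioo (0 : ℝ) 1, thinc β x ≤ x / c) ↔
      c ≤ Real.sinh β / (β * Real.exp β) := by
  obtain ⟨hc0, hc1⟩ := hc
  have hS : 0 < Real.sinh β := Real.sinh_pos_iff.2 hβ
  have hE : 0 < Real.exp β := Real.exp_pos β
  have hbe : 0 < β * Real.exp β := mul_pos hβ hE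
  constructor
  · intro h
    have hd := thinc_hasDerivAt β hβ
    have hslope := hasDerivAt_iff_tendsto_slope.1 hd
    have hmono : (nhdsWithin (0:ℝ) (Set.Ioi 0)) ≤ (nhdsWithin (0:ℝ) {(0:ℝ)}ᶜ) :=
      nhdsWithin_mono _ (fun x hx => ne_of_gt hx)
    have hslope' := hslope.mono_left hmono
    have hev : ∀ᶠ x in nhdsWithin (0:ℝ) (Set.Ioi 0),
        slope (thinc β) 0 x ≤ 1 / c := by
      filter_upwards [Ioo_mem_nhdsGT_of_mem (by norm_num : (0:ℝ) ∈ Set.Ico 0 1)]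
        with x hx
      have hx0 : 0 < x := hx.1
      have hxc := h x hx
      have hsl : slope (thinc β) 0 x = thinc β x / x := by
        rw [slope_def_field, thinc_zero]; ring_nf
      rw [hsl, div_le_div_iff₀ hx0 hc0]
      rw [le_div_iff₀ hc0] at hxc
      linarith
    have hle : β * Real.exp β / Real.sinh β ≤ 1 / c := le_of_tendsto hslope' hev
    rw [div_le_div_iff₀ hS hc0] at hle
    rw [le_div_iff₀ hbe]
    linarith
  · intro hcb x hx
    obtain ⟨hx0, hx1⟩ := hx
    have key : c * (β * Real.exp β) ≤ Real.sinh β := (le_div_iff₀ hbe).1 hcb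
    have hexp : Real.exp (β * (1 - 2 * x)) = Real.exp β * Real.exp (-(2 * β * x)) := by
      rw [← Real.exp_add]; ring_nf
    have hineq : 1 - Real.exp (-(2 * β * x)) ≤ 2 * β * x := by
      have := Real.add_one_le_exp (-(2 * β * x))
      linarith
    have h1 : thinc β x ≤ x * (β * Real.exp β / Real.sinh β) := by
      rw [thinc, Real.sinh_add_cosh, hexp, div_le_iff₀ (by positivity)]
      have : x * (β * Real.exp β / Real.sinh β) * (2 * Real.sinh β)
          = 2 * β * x * Real.exp β := by field_simp
      rw [this]
      nlinarith [hE]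
    have h2 : β * Real.exp β / Real.sinh β ≤ 1 / c := by
      rw [div_le_div_iff₀ hS hc0]
      linarith
    calc thinc β x ≤ x * (β * Real.exp β / Real.sinh β) := h1
      _ ≤ x * (1 / c) := by
        exact mul_le_mul_of_nonneg_left h2 (le_of_lt hx0)
      _ = x / c := by ring
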